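/- For $a \in [1/\sqrt{2}, 1]$, the volume of $[-a,a]^3 \cap B_3(1)$ equals $\pi(6a - 2a^3 - 8/3)$. -/

import Mathlib

open MeasureTheory Set Real

lemma stmt13_mem_ball_iff (n : ℕ) (r : ℝ) (hr : 0 ≤ r) (x : Fin n → ℝ) :
    WithLp.toLp 2 x ∈
      Metric.closedBall (0 : EuclideanSpace ℝ (Fin n)) r ↔ ∑ i, x i ^ 2 ≤ r ^ 2 := by
  rw [Metric.mem_closedBall, EuclideanSpace.dist_eq]
  have h : ∀ i, dist ((WithLp.toLp 2 x : EuclideanSpace ℝ (Fin n)) i)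
      ((0 : EuclideanSpace ℝ (Fin n)) i) ^ 2 = x i ^ 2 := by
    intro i
    simp [Real.dist_eq, sq_abs]
  rw [Finset.sum_congr rfl fun i _ => h i, Real.sqrt_le_left hr]

-- volume of euclidean-type ball as subset of pi space
lemma stmt13_pi_ball_vol (n : ℕ) [NeZero n] (r : ℝ) (hr : 0 ≤ r) :
    volume {x : Fin n → ℝ | ∑ i, x i ^ 2 ≤ r ^ 2}
      = (ENNReal.ofReal r) ^ n * ENNReal.ofReal (Real.sqrt π ^ n / Real.Gamma (n / 2 + 1)) := by
  have hset : {x : Fin n → ℝ | ∑ i, x i ^ 2 ≤ r ^ 2} =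
      (WithLp.toLp 2 : (Fin n → ℝ) → EuclideanSpace ℝ (Fin n)) ⁻¹'
        (Metric.closedBall (0 : EuclideanSpace ℝ (Fin n)) r) := by
    ext x; exact (stmt13_mem_ball_iff n r hr x).symm
  rw [hset, (PiLp.volume_preserving_toLp (Fin n)).measure_preimage
    measurableSet_closedBall.nullMeasurableSet, EuclideanSpace.volume_closedBall]
  simp

lemma stmt13_hyperplane_vol : volume {y : Fin 2 → ℝ | y 0 = 0} = 0 := by
  have h : {y : Fin 2 → ℝ | y 0 = 0} =
      Set.pi Set.univ (fun i : Fin 2 => if i = 0 then ({0} : Set ℝ) else Set.univ) := by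
    ext y
    simp only [mem_setOf_eq, Set.mem_pi, Set.mem_univ, forall_true_left]
    constructor
    · intro h i; fin_cases i <;> simp [h]
    · intro h; have := h 0; simpa using this
  rw [h, volume_pi_pi]
  simp [Fin.prod_univ_two]

lemma stmt13_disk_vol (c : ℝ) :
    volume {y : Fin 2 → ℝ | y 0 ^ 2 + y 1 ^ 2 ≤ c} = ENNReal.ofReal (π * c) := by
  rcases le_or_gt c 0 with hc | hc
  · have hsub : {y : Fin 2 → ℝ | y 0 ^ 2 + y 1 ^ 2 ≤ c} ⊆ {y : Fin 2 → ℝ | y 0 = 0} := by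
      intro y hy
      simp only [mem_setOf_eq] at hy ⊢
      nlinarith [sq_nonneg (y 0), sq_nonneg (y 1)]
    rw [measure_mono_null hsub stmt13_hyperplane_vol, Eq.comm, ENNReal.ofReal_eq_zero]
    nlinarith [Real.pi_pos]
  · have hc' : (0:ℝ) ≤ c := hc.le
    have h1 : {y : Fin 2 → ℝ | y 0 ^ 2 + y 1 ^ 2 ≤ c} =
        {y : Fin 2 → ℝ | ∑ i, y i ^ 2 ≤ (Real.sqrt c) ^ 2} := by
      ext y; simp [Fin.sum_univ_two, Real.sq_sqrt hc']
    rw [h1, stmt13_pi_ball_vol 2 _ (Real.sqrt_nonneg c),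
      show ((2:ℕ):ℝ)/2 + 1 = 2 by norm_num, Real.Gamma_two,
      ← ENNReal.ofReal_pow (Real.sqrt_nonneg c), Real.sq_sqrt hc',
      Real.sq_sqrt Real.pi_pos.le, ← ENNReal.ofReal_mul hc']
    rw [div_one, mul_comm c π]

lemma stmt13_ball3_vol : volume {x : Fin 3 → ℝ | ∑ i, x i ^ 2 ≤ 1}
    = ENNReal.ofReal (π * (4/3)) := by
  have h1 : {x : Fin 3 → ℝ | ∑ i, x i ^ 2 ≤ 1} =
      {x : Fin 3 → ℝ | ∑ i, x i ^ 2 ≤ (1:ℝ) ^ 2} := by norm_num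
  rw [h1, stmt13_pi_ball_vol 3 1 zero_le_one]
  have hg : Real.Gamma (((3:ℕ):ℝ) / 2 + 1) = 3 / 4 * Real.sqrt π := by
    have h32 : ((3:ℕ):ℝ)/2 + 1 = 3/2 + 1 := by norm_num
    rw [h32, Real.Gamma_add_one (by norm_num),
      show (3:ℝ)/2 = 1/2 + 1 by norm_num, Real.Gamma_add_one (by norm_num),
      Real.Gamma_one_half_eq]
    ring
  rw [hg]
  have hsq : Real.sqrt π ^ 3 / (3 / 4 * Real.sqrt π) = π * (4/3) := by
    have h := Real.sq_sqrt Real.pi_pos.le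
    have hs : Real.sqrt π > 0 := Real.sqrt_pos.mpr Real.pi_pos
    field_simp
    nlinarith [h, hs]
  rw [hsq]
  simp


-- one-sided slab integral
lemma stmt13_half_integral (a : ℝ) (ha : 0 ≤ a) (ha1 : a ≤ 1) :
    ∫⁻ t in Set.Ioi a, ENNReal.ofReal (π * (1 - t ^ 2))
      = ENNReal.ofReal (π * (2/3 - a + a^3/3)) := by
  have hsplit : Set.Ioi a = Set.Ioc a 1 ∪ Set.Ioi (1:ℝ) := (Set.Ioc_union_Ioi_eq_Ioi ha1).symm
  rw [hsplit, lintegral_union measurableSet_Ioi (Set.Ioc_disjoint_Ioi le_rfl)]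
  have h2 : ∫⁻ t in Set.Ioi (1:ℝ), ENNReal.ofReal (π * (1 - t ^ 2)) = 0 := by
    rw [setLIntegral_congr_fun_ae measurableSet_Ioi
      (ae_of_all _ (fun t (ht : t ∈ Set.Ioi (1:ℝ)) => by
        rw [ENNReal.ofReal_eq_zero]
        have h1t : (1:ℝ) < t := ht
        nlinarith [mul_pos Real.pi_pos (show (0:ℝ) < t^2 - 1 by nlinarith)]))]
    simp
  rw [h2, add_zero]
  have hint : IntegrableOn (fun t => π * (1 - t ^ 2)) (Set.Ioc a 1) volume :=
    (Continuous.integrableOn_Ioc (by continuity))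
  have hnn : 0 ≤ᵐ[volume.restrict (Set.Ioc a 1)] fun t => π * (1 - t ^ 2) := by
    filter_upwards [ae_restrict_mem measurableSet_Ioc] with t ht
    simp only [Pi.zero_apply]
    obtain ⟨hta, ht1⟩ := ht
    have h0t : 0 ≤ t := le_of_lt (lt_of_le_of_lt ha hta)
    nlinarith [Real.pi_pos.le, mul_nonneg Real.pi_pos.le (show (0:ℝ) ≤ 1 - t^2 by nlinarith)]
  rw [← ofReal_integral_eq_lintegral_ofReal hint hnn]
  congr 1
  rw [← intervalIntegral.integral_of_le ha1]
  have : ∫ t in a..1, π * (1 - t ^ 2) = π * ∫ t in a..1, (1 - t ^ 2) := by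
    exact intervalIntegral.integral_const_mul π _
  rw [this, intervalIntegral.integral_sub intervalIntegrable_const (by
    exact intervalIntegral.intervalIntegrable_pow 2)]
  rw [intervalIntegral.integral_const, integral_pow]
  push_cast
  simp only [smul_eq_mul]
  ring

lemma stmt13_neg_half_integral (a : ℝ) (ha : 0 ≤ a) (ha1 : a ≤ 1) :
    ∫⁻ t in Set.Iio (-a), ENNReal.ofReal (π * (1 - t ^ 2))
      = ENNReal.ofReal (π * (2/3 - a + a^3/3)) := by
  have hmp : MeasurePreserving (fun t : ℝ => -t) volume volume :=
    Measure.measurePreserving_neg volume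
  have hpre : (fun t : ℝ => -t) ⁻¹' (Set.Iio (-a)) = Set.Ioi a := by
    ext t; simp [neg_lt_neg_iff, lt_neg]
  have := (hmp.restrict_preimage (s := Set.Iio (-a)) measurableSet_Iio).lintegral_comp
    (f := fun t => ENNReal.ofReal (π * (1 - t ^ 2))) (by measurability)
  rw [hpre] at this
  rw [← stmt13_half_integral a ha ha1, ← this]
  simp [neg_sq]

lemma stmt13_cap_vol (a : ℝ) (ha : 0 ≤ a) (ha1 : a ≤ 1) (i : Fin 3)
    (hdisk : ∀ c : ℝ, volume {y : Fin 2 → ℝ | y 0 ^ 2 + y 1 ^ 2 ≤ c} = ENNReal.ofReal (π * c)) :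
    volume {x : Fin 3 → ℝ | (∑ j, x j ^ 2 ≤ 1) ∧ a < |x i|}
      = ENNReal.ofReal (2 * (π * (2/3 - a + a^3/3))) := by
  have hV : (0:ℝ) ≤ π * (2/3 - a + a^3/3) := by
    have h1 : (0:ℝ) ≤ (1 - a)^2 * (a + 2) :=
      mul_nonneg (sq_nonneg _) (by linarith)
    have h2 : (0:ℝ) ≤ 2/3 - a + a^3/3 := by nlinarith
    exact mul_nonneg Real.pi_pos.le h2
  set D := {x : Fin 3 → ℝ | (∑ j, x j ^ 2 ≤ 1) ∧ a < |x i|} with hD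
  have hm1 : Measurable (fun x : Fin 3 → ℝ => ∑ j, x j ^ 2) :=
    Finset.measurable_sum _ (fun j _ => (measurable_pi_apply j).pow_const 2)
  have hm2 : Measurable (fun x : Fin 3 → ℝ => |x i|) := (measurable_pi_apply i).abs
  have hDmeas : MeasurableSet D := by
    rw [hD, Set.setOf_and]
    exact (measurableSet_le hm1 measurable_const).inter (measurableSet_lt measurable_const hm2)
  set e := MeasurableEquiv.piFinSuccAbove (fun _ : Fin 3 => ℝ) i with he
  have hmp := (volume_preserving_piFinSuccAbove (fun _ : Fin 3 => ℝ) i)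
  have hkey : volume D = volume (e.symm ⁻¹' D) :=
    ((MeasurePreserving.symm e hmp).measure_preimage hDmeas.nullMeasurableSet).symm
  have hpre : e.symm ⁻¹' D =
      {p : ℝ × (Fin 2 → ℝ) | (p.1 ^ 2 + (p.2 0 ^ 2 + p.2 1 ^ 2) ≤ 1) ∧ a < |p.1|} := by
    ext ⟨t, y⟩
    have hsum : ∑ j, (i.insertNth t y : Fin 3 → ℝ) j ^ 2 = t ^ 2 + (y 0 ^ 2 + y 1 ^ 2) := by
      have h := Fin.sum_univ_succAbove (fun j => (i.insertNth t y : Fin 3 → ℝ) j ^ 2) i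
      simpa [Fin.insertNth_apply_same, Fin.insertNth_apply_succAbove, Fin.sum_univ_two] using h
    simp only [hD, he, Set.mem_preimage, Set.mem_setOf_eq,
      MeasurableEquiv.piFinSuccAbove_symm_apply]
    rw [show ((Fin.insertNthEquiv (fun _ : Fin 3 => ℝ) i) (t, y) : Fin 3 → ℝ)
      = (i.insertNth t y : Fin 3 → ℝ) from rfl, hsum, Fin.insertNth_apply_same]
  have hm3 : Measurable (fun p : ℝ × (Fin 2 → ℝ) => p.1 ^ 2 + (p.2 0 ^ 2 + p.2 1 ^ 2)) :=
    (measurable_fst.pow_const 2).add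
      ((((measurable_pi_apply 0).comp measurable_snd).pow_const 2).add
        (((measurable_pi_apply 1).comp measurable_snd).pow_const 2))
  have hm4 : Measurable (fun p : ℝ × (Fin 2 → ℝ) => |p.1|) := measurable_fst.abs
  rw [hkey, hpre, Measure.volume_eq_prod, Measure.prod_apply (by
    rw [Set.setOf_and]
    exact (measurableSet_le hm3 measurable_const).inter (measurableSet_lt measurable_const hm4))]
  have hslice : ∀ t : ℝ,
      volume (Prod.mk t ⁻¹' {p : ℝ × (Fin 2 → ℝ) |
          (p.1 ^ 2 + (p.2 0 ^ 2 + p.2 1 ^ 2) ≤ 1) ∧ a < |p.1|})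
        = Set.indicator {t : ℝ | a < |t|} (fun t => ENNReal.ofReal (π * (1 - t ^ 2))) t := by
    intro t
    rcases lt_or_ge a |t| with h | h
    · rw [Set.indicator_of_mem (show t ∈ {t : ℝ | a < |t|} from h) (fun t => ENNReal.ofReal (π * (1 - t ^ 2)))]
      have hset : Prod.mk t ⁻¹' {p : ℝ × (Fin 2 → ℝ) |
          (p.1 ^ 2 + (p.2 0 ^ 2 + p.2 1 ^ 2) ≤ 1) ∧ a < |p.1|}
          = {y : Fin 2 → ℝ | y 0 ^ 2 + y 1 ^ 2 ≤ 1 - t ^ 2} := by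
        ext y
        simp only [Set.mem_preimage, Set.mem_setOf_eq]
        constructor
        · rintro ⟨h1, _⟩; linarith
        · intro h1; exact ⟨by linarith, h⟩
      rw [hset, hdisk]
    · rw [Set.indicator_of_notMem (show t ∉ {t : ℝ | a < |t|} by simpa using h) (fun t => ENNReal.ofReal (π * (1 - t ^ 2)))]
      have hset : Prod.mk t ⁻¹' {p : ℝ × (Fin 2 → ℝ) |
          (p.1 ^ 2 + (p.2 0 ^ 2 + p.2 1 ^ 2) ≤ 1) ∧ a < |p.1|} = ∅ := by
        ext y
        simp only [Set.mem_preimage, Set.mem_setOf_eq, Set.mem_empty_iff_false, iff_false]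
        rintro ⟨_, h2⟩; exact absurd h2 (not_lt.mpr h)
      rw [hset, measure_empty]
  rw [lintegral_congr hslice,
    lintegral_indicator (measurableSet_lt measurable_const measurable_abs)]
  have habs : {t : ℝ | a < |t|} = Set.Iio (-a) ∪ Set.Ioi a := by
    ext t
    simp only [Set.mem_setOf_eq, Set.mem_union, Set.mem_Iio, Set.mem_Ioi, lt_abs]
    constructor
    · rintro (h | h); exacts [Or.inr h, Or.inl (by linarith)]
    · rintro (h | h); exacts [Or.inr (by linarith), Or.inl h]
  rw [habs, lintegral_union measurableSet_Ioi (by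
    apply Set.disjoint_left.mpr
    intro t ht1 ht2
    simp only [Set.mem_Iio] at ht1
    simp only [Set.mem_Ioi] at ht2
    linarith)]
  rw [stmt13_neg_half_integral a ha ha1, stmt13_half_integral a ha ha1, two_mul,
    ENNReal.ofReal_add hV hV]

theorem stmt_13 (a : ℝ) (h0 : 1 / Real.sqrt 2 ≤ a) (h1 : a ≤ 1) :
    volume ({x : EuclideanSpace ℝ (Fin 3) | ∀ i, x i ∈ Icc (-a) a}
        ∩ Metric.closedBall (0 : EuclideanSpace ℝ (Fin 3)) 1)
      = ENNReal.ofReal (π * (6 * a - 2 * a ^ 3 - 8 / 3)) := by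
  have hs2 : (0:ℝ) < Real.sqrt 2 := Real.sqrt_pos.mpr (by norm_num)
  have ha0 : (0:ℝ) ≤ a := le_trans (by positivity) h0
  have hsqle : Real.sqrt 2 ≤ 3/2 := by
    rw [show (3:ℝ)/2 = Real.sqrt ((3/2)^2) by rw [Real.sqrt_sq]; norm_num]
    exact Real.sqrt_le_sqrt (by norm_num)
  have h23 : (2:ℝ)/3 ≤ a := le_trans (by
    rw [div_le_div_iff₀ (by norm_num) hs2]; linarith) h0
  have ha2 : (1:ℝ)/2 ≤ a ^ 2 := by
    have h12 : (1 / Real.sqrt 2) ^ 2 = 1/2 := by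
      rw [div_pow, one_pow, Real.sq_sqrt (by norm_num : (0:ℝ) ≤ 2)]
    calc (1:ℝ)/2 = (1 / Real.sqrt 2)^2 := h12.symm
      _ ≤ a ^ 2 := by
        apply pow_le_pow_left₀ (by positivity) h0
  -- transfer to pi space
  set T := {x : Fin 3 → ℝ | (∀ i, x i ∈ Icc (-a) a) ∧ ∑ j, x j ^ 2 ≤ 1} with hT
  have hmeasS : MeasurableSet ({x : EuclideanSpace ℝ (Fin 3) | ∀ i, x i ∈ Icc (-a) a}
      ∩ Metric.closedBall (0 : EuclideanSpace ℝ (Fin 3)) 1) := by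
    apply MeasurableSet.inter _ measurableSet_closedBall
    rw [show {x : EuclideanSpace ℝ (Fin 3) | ∀ i, x i ∈ Icc (-a) a}
        = ⋂ i, (fun x : EuclideanSpace ℝ (Fin 3) => x i) ⁻¹' Icc (-a) a by
      ext x; simp]
    exact MeasurableSet.iInter fun i =>
      ((EuclideanSpace.proj (𝕜 := ℝ) i).continuous.measurable) measurableSet_Icc
  have htransfer : volume ({x : EuclideanSpace ℝ (Fin 3) | ∀ i, x i ∈ Icc (-a) a}
      ∩ Metric.closedBall (0 : EuclideanSpace ℝ (Fin 3)) 1) = volume T := by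
    rw [← (PiLp.volume_preserving_toLp (Fin 3)).measure_preimage
      hmeasS.nullMeasurableSet]
    congr 1
    ext x
    simp only [Set.mem_preimage, Set.mem_inter_iff, Set.mem_setOf_eq, hT]
    rw [stmt13_mem_ball_iff 3 1 zero_le_one x, one_pow]
  rw [htransfer]
  -- decomposition
  set B := {x : Fin 3 → ℝ | ∑ j, x j ^ 2 ≤ 1} with hB
  set D := fun i : Fin 3 => {x : Fin 3 → ℝ | (∑ j, x j ^ 2 ≤ 1) ∧ a < |x i|} with hDdef
  have hm1 : Measurable (fun x : Fin 3 → ℝ => ∑ j, x j ^ 2) :=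
    Finset.measurable_sum _ (fun j _ => (measurable_pi_apply j).pow_const 2)
  have hmD : ∀ i, MeasurableSet (D i) := fun i => by
    rw [hDdef]
    simp only [Set.setOf_and]
    exact (measurableSet_le hm1 measurable_const).inter
      (measurableSet_lt measurable_const (measurable_pi_apply i).abs)
  have hmT : MeasurableSet T := by
    rw [hT, Set.setOf_and]
    apply MeasurableSet.inter _ (measurableSet_le hm1 measurable_const)
    rw [show {x : Fin 3 → ℝ | ∀ i, x i ∈ Icc (-a) a}
        = ⋂ i, (fun x : Fin 3 → ℝ => x i) ⁻¹' Icc (-a) a by ext x; simp]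
    exact MeasurableSet.iInter fun i => (measurable_pi_apply i) measurableSet_Icc
  have hBeq : B = T ∪ ⋃ i, D i := by
    ext x
    simp only [hB, hT, hDdef, Set.mem_union, Set.mem_iUnion, Set.mem_setOf_eq, Set.mem_Icc]
    constructor
    · intro hx
      by_cases hcube : ∀ i, -a ≤ x i ∧ x i ≤ a
      · exact Or.inl ⟨hcube, hx⟩
      · push_neg at hcube
        obtain ⟨i, hi⟩ := hcube
        refine Or.inr ⟨i, hx, ?_⟩
        rcases lt_or_ge a (x i) with h | h
        · calc a < x i := h
            _ ≤ |x i| := le_abs_self _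
        · have : x i < -a := by
            by_contra hcon
            push_neg at hcon
            exact absurd (hi hcon) (not_lt.mpr h)
          calc a < -(x i) := by linarith
            _ ≤ |x i| := neg_le_abs _
    · rintro (⟨_, hx⟩ | ⟨i, hx, _⟩) <;> exact hx
  have hdisj : Disjoint T (⋃ i, D i) := by
    rw [Set.disjoint_left]
    intro x hxT hxD
    simp only [Set.mem_iUnion] at hxD
    obtain ⟨i, _, hi⟩ := hxD
    obtain ⟨hcube, _⟩ := hxT
    obtain ⟨h1', h2'⟩ := hcube i
    exact absurd hi (not_lt.mpr (abs_le.mpr ⟨h1', h2'⟩))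
  have hpair : Pairwise (Function.onFun Disjoint D) := by
    intro i j hij
    rw [Function.onFun, Set.disjoint_left]
    intro x hxi hxj
    obtain ⟨hsum, hi⟩ := hxi
    obtain ⟨_, hj⟩ := hxj
    have hi2 : a ^ 2 < x i ^ 2 := by
      have := pow_lt_pow_left₀ hi ha0 (two_ne_zero)
      rwa [sq_abs] at this
    have hj2 : a ^ 2 < x j ^ 2 := by
      have := pow_lt_pow_left₀ hj ha0 (two_ne_zero)
      rwa [sq_abs] at this
    have hsub : x i ^ 2 + x j ^ 2 ≤ ∑ k, x k ^ 2 := by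
      have h := Finset.sum_le_sum_of_subset_of_nonneg
        (Finset.subset_univ ({i, j} : Finset (Fin 3))) (fun k _ _ => sq_nonneg (x k))
      rwa [Finset.sum_pair hij] at h
    linarith
  -- measure computation
  have hvol : volume B = volume T + ∑ i : Fin 3, volume (D i) := by
    rw [hBeq, measure_union hdisj (MeasurableSet.iUnion hmD),
      measure_iUnion hpair hmD, tsum_fintype]
  rw [stmt13_ball3_vol] at hvol
  have hcap : ∀ i : Fin 3, volume (D i) = ENNReal.ofReal (2 * (π * (2/3 - a + a^3/3))) :=
    fun i => stmt13_cap_vol a ha0 h1 i stmt13_disk_vol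
  simp only [hcap] at hvol
  have hC : (0:ℝ) ≤ 2 * (π * (2/3 - a + a^3/3)) := by
    have h2 : (0:ℝ) ≤ 2/3 - a + a^3/3 := by nlinarith [mul_nonneg (sq_nonneg (1-a)) (show (0:ℝ) ≤ a + 2 by linarith)]
    positivity
  have hR : (0:ℝ) ≤ π * (6 * a - 2 * a ^ 3 - 8 / 3) := by
    have h2 : (0:ℝ) ≤ 6 * a - 2 * a ^ 3 - 8/3 := by
      nlinarith [mul_nonneg (mul_nonneg (mul_nonneg (show (0:ℝ) ≤ 2 by norm_num) ha0)
        (show (0:ℝ) ≤ 1 - a by linarith)) (show (0:ℝ) ≤ 1 + a by linarith)]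
    exact mul_nonneg Real.pi_pos.le h2
  have hsum3 : (∑ _i : Fin 3, ENNReal.ofReal (2 * (π * (2/3 - a + a^3/3))))
      = ENNReal.ofReal (3 * (2 * (π * (2/3 - a + a^3/3)))) := by
    rw [Fin.sum_univ_three, ← ENNReal.ofReal_add hC hC, ← ENNReal.ofReal_add (by linarith) hC]
    ring_nf
  rw [hsum3] at hvol
  have hkey : ENNReal.ofReal (π * (4/3))
      = ENNReal.ofReal (π * (6 * a - 2 * a ^ 3 - 8 / 3))
        + ENNReal.ofReal (3 * (2 * (π * (2/3 - a + a^3/3)))) := by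
    rw [← ENNReal.ofReal_add hR (by linarith)]
    congr 1
    ring
  rw [hkey] at hvol
  exact (ENNReal.add_left_inj ENNReal.ofReal_ne_top).mp hvol.symm
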